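/- For all n ≥ 0, F_{2n+2} - 1 = ⌊Φ² · F_{2n}⌋, where F is the Fibonacci sequence and Φ is the golden ratio. -/

import Mathlib

open Real goldenRatio

noncomputable def Φ : ℝ := (1 + Real.sqrt 5) / 2

lemma key (n : ℕ) : goldenRatio ^ 2 * (Nat.fib (2 * n) : ℝ) =
    (Nat.fib (2 * n + 2) : ℝ) - goldenConj ^ (2 * n) := by
  rw [Real.coe_fib_eq, Real.coe_fib_eq]
  have h5 : (√5 : ℝ) ≠ 0 := by positivity
  have hφψ : goldenRatio * goldenConj = -1 := goldenRatio_mul_goldenConj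
  field_simp
  ring_nf

theorem fib_even_sub_one_eq_floor (n : ℕ) :
    (Nat.fib (2 * n + 2) : ℤ) - 1 = ⌊Φ ^ 2 * (Nat.fib (2 * n) : ℝ)⌋ := by
  have hΦ : Φ = goldenRatio := rfl
  rw [hΦ, key n]
  have hψ : goldenConj ^ (2 * n) = (goldenConj ^ 2) ^ n := by rw [← pow_mul]
  have hs : (Real.sqrt 5) ^ 2 = 5 := Real.sq_sqrt (by norm_num)
  have hlt : Real.sqrt 5 < 3 := by nlinarith [Real.sqrt_nonneg 5]
  have hgt : 1 < Real.sqrt 5 := by nlinarith [Real.sqrt_nonneg 5]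
  have hψ2pos : (0:ℝ) < goldenConj ^ 2 := by rw [goldenConj]; nlinarith
  have hψ2le : goldenConj ^ 2 ≤ 1 := by rw [goldenConj]; nlinarith
  have h1 : (0:ℝ) < goldenConj ^ (2 * n) := by rw [hψ]; exact pow_pos hψ2pos n
  have h2 : goldenConj ^ (2 * n) ≤ 1 := by
    rw [hψ]; exact pow_le_one₀ hψ2pos.le hψ2le
  symm
  rw [Int.floor_eq_iff]
  constructor
  · push_cast; linarith
  · push_cast; linarith
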